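/- If an absolutely monotonic power series I(x) = Σ a_n x^n (not identically zero) has summands that concentrate superpolynomially near n ≈ f(x) with window term C x^{-ν}, then there are infinitely many indices n with a_n > 0; in particular, I is not a polynomial. -/

import Mathlib

open Filter Asymptotics Polynomial

noncomputable def Iser (a : ℕ → ℝ) (x : ℝ) : ℝ := ∑' n : ℕ, a n * x ^ n

noncomputable def sumLE (a : ℕ → ℝ) (x y : ℝ) : ℝ :=
  ∑' n : ℕ, if (n : ℤ) ≤ ⌊y⌋ then a n * x ^ n else 0

noncomputable def sumGE (a : ℕ → ℝ) (x y : ℝ) : ℝ :=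
  ∑' n : ℕ, if ⌊y⌋ ≤ (n : ℤ) then a n * x ^ n else 0

/-- `I(x) = Σ aₙ xⁿ` is absolutely monotonic: all coefficients are nonnegative and
the series converges for every `x > 0`. -/
def AbsMono (a : ℕ → ℝ) : Prop :=
  (∀ n, 0 ≤ a n) ∧ ∀ x : ℝ, 0 < x → Summable fun n : ℕ => a n * x ^ n

/-- The summands of `Σ aₙ xⁿ` concentrate superpolynomially near `n ≈ f(x)` with
window term `C x^{-ν}`. -/
def SuperConc (a : ℕ → ℝ) (f : ℝ → ℝ) (C ν : ℝ) : Prop :=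
  ∀ p : ℝ, 0 < p →
    ((fun x : ℝ => sumLE a x (f x * (1 - C * x ^ (-ν))) / Iser a x)
        =o[atTop] fun x : ℝ => x ^ (-p)) ∧
    ((fun x : ℝ => sumGE a x (f x * (1 + C * x ^ (-ν))) / Iser a x)
        =o[atTop] fun x : ℝ => x ^ (-p))

/-- The summands of `Σ aₙ xⁿ` concentrate exponentially near `n ≈ f(x)` with
window term `C x^{-ν}` and parameters `(α, β)`. -/
def ExpConc (a : ℕ → ℝ) (f : ℝ → ℝ) (C ν α β : ℝ) : Prop :=
  ((fun x : ℝ => sumLE a x (f x * (1 - C * x ^ (-ν))) / Iser a x)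
      =O[atTop] fun x : ℝ => Real.exp (-α * x ^ β)) ∧
  ((fun x : ℝ => sumGE a x (f x * (1 + C * x ^ (-ν))) / Iser a x)
      =O[atTop] fun x : ℝ => Real.exp (-α * x ^ β))

/-- A real sequence is subpolynomial if `bₙ / n^p → 0` for every `p > 0`. -/
def Subpoly (b : ℕ → ℝ) : Prop :=
  ∀ p : ℝ, 0 < p → Tendsto (fun n : ℕ => b n / (n : ℝ) ^ p) atTop (nhds 0)

theorem stmt2 (a : ℕ → ℝ) (f : Polynomial ℝ) (C ν : ℝ) (hC : 0 < C) (hν : 0 < ν)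
    (ha : AbsMono a) (hne : ∃ n, a n ≠ 0) (hlead : 0 < f.leadingCoeff)
    (hconc : SuperConc a (fun x => f.eval x) C ν) :
    {n : ℕ | 0 < a n}.Infinite := by
  by_contra hfin
  rw [Set.not_infinite] at hfin
  obtain ⟨m, hm⟩ := hne
  have hmS : m ∈ hfin.toFinset := by
    simp only [Set.Finite.mem_toFinset, Set.mem_setOf_eq]
    exact lt_of_le_of_ne (ha.1 m) (Ne.symm hm)
  have hsne : hfin.toFinset.Nonempty := ⟨m, hmS⟩
  set N := hfin.toFinset.max' hsne with hNdef
  have haN : 0 < a N := by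
    have := hfin.toFinset.max'_mem hsne
    simpa only [Set.Finite.mem_toFinset, Set.mem_setOf_eq] using this
  have hzero : ∀ n, N < n → a n = 0 := by
    intro n hn
    by_contra h
    have hmem : n ∈ hfin.toFinset := by
      simp only [Set.Finite.mem_toFinset, Set.mem_setOf_eq]
      exact lt_of_le_of_ne (ha.1 n) (Ne.symm h)
    exact absurd (hfin.toFinset.le_max' n hmem) (not_le.mpr hn)
  set Tot : ℝ := ∑ n ∈ Finset.range (N + 1), a n with hTot
  have hTotpos : 0 < Tot := by
    have h1 : a N ≤ Tot := by
      apply Finset.single_le_sum (f := fun n => a n) (fun i _ => ha.1 i)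
      simp
    linarith
  set ε : ℝ := a N / Tot with hε
  have hεpos : 0 < ε := div_pos haN hTotpos
  -- dichotomy eventually
  have hw0 : Tendsto (fun x : ℝ => C * x ^ (-ν)) atTop (nhds 0) := by
    have := (tendsto_rpow_neg_atTop hν).const_mul C
    simpa using this
  have hdich : ∀ᶠ x : ℝ in atTop,
      ((N : ℤ) ≤ ⌊f.eval x * (1 - C * x ^ (-ν))⌋ ∨
        ⌊f.eval x * (1 + C * x ^ (-ν))⌋ ≤ (N : ℤ)) := by
    rcases lt_or_ge 0 f.degree with hdeg | hdeg
    · -- nonconstant: f.eval x * (1 - w) → ∞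
      have hfa : Tendsto (fun x => f.eval x) atTop atTop :=
        Polynomial.tendsto_atTop_of_leadingCoeff_nonneg f hdeg hlead.le
      have h1w : Tendsto (fun x : ℝ => 1 - C * x ^ (-ν)) atTop (nhds 1) := by
        have := (tendsto_const_nhds (x := (1:ℝ)) (f := atTop)).sub hw0
        simpa using this
      have hy : Tendsto (fun x : ℝ => f.eval x * (1 - C * x ^ (-ν))) atTop atTop :=
        Filter.Tendsto.atTop_mul_pos one_pos hfa h1w
      filter_upwards [hy.eventually_ge_atTop (N : ℝ)] with x hx
      left
      exact Int.le_floor.mpr (by exact_mod_cast hx)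
    · -- constant polynomial
      obtain ⟨c, hc⟩ := Polynomial.natDegree_eq_zero.mp
        (Polynomial.natDegree_eq_zero_iff_degree_le_zero.mpr hdeg)
      have hceval : ∀ x : ℝ, f.eval x = c := by intro x; rw [← hc]; simp
      have hcpos : 0 < c := by
        have : f.leadingCoeff = c := by rw [← hc]; simp [Polynomial.leadingCoeff_C]
        rwa [this] at hlead
      have hsmall : ∀ᶠ x : ℝ in atTop, 2 * c * (C * x ^ (-ν)) < 1 := by
        have : Tendsto (fun x : ℝ => 2 * c * (C * x ^ (-ν))) atTop (nhds 0) := by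
          have := hw0.const_mul (2 * c)
          simpa using this
        exact this.eventually_lt_const one_pos
      filter_upwards [hsmall] with x hx
      by_cases hcase : (N : ℝ) ≤ f.eval x * (1 - C * x ^ (-ν))
      · left; exact Int.le_floor.mpr (by exact_mod_cast hcase)
      · right
        push_neg at hcase
        have : ⌊f.eval x * (1 + C * x ^ (-ν))⌋ < (N : ℤ) + 1 := by
          apply Int.floor_lt.mpr
          have heq : f.eval x * (1 + C * x ^ (-ν)) =
              f.eval x * (1 - C * x ^ (-ν)) + 2 * c * (C * x ^ (-ν)) := by
            rw [hceval x]; ring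
          rw [heq]
          push_cast
          linarith
        omega
  -- pointwise lower bound on ratio sum
  have hkey : ∀ᶠ x : ℝ in atTop,
      ε ≤ sumLE a x (f.eval x * (1 - C * x ^ (-ν))) / Iser a x
          + sumGE a x (f.eval x * (1 + C * x ^ (-ν))) / Iser a x := by
    filter_upwards [hdich, eventually_ge_atTop (1 : ℝ)] with x hdx hx1
    have hx0 : (0 : ℝ) < x := lt_of_lt_of_le one_pos hx1
    have hterm_nonneg : ∀ n : ℕ, 0 ≤ a n * x ^ n := fun n =>
      mul_nonneg (ha.1 n) (pow_nonneg hx0.le n)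
    have hvan : ∀ n ∉ Finset.range (N + 1), a n * x ^ n = 0 := by
      intro n hn
      rw [Finset.mem_range, not_lt] at hn
      rw [hzero n (by omega), zero_mul]
    have hsI : Summable (fun n : ℕ => a n * x ^ n) := ha.2 x hx0
    have hs1 : Summable (fun n : ℕ =>
        if (n : ℤ) ≤ ⌊f.eval x * (1 - C * x ^ (-ν))⌋ then a n * x ^ n else 0) := by
      apply summable_of_ne_finset_zero (s := Finset.range (N + 1))
      intro n hn; rw [hvan n hn]; split <;> rfl
    have hs2 : Summable (fun n : ℕ =>
        if ⌊f.eval x * (1 + C * x ^ (-ν))⌋ ≤ (n : ℤ) then a n * x ^ n else 0) := by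
      apply summable_of_ne_finset_zero (s := Finset.range (N + 1))
      intro n hn; rw [hvan n hn]; split <;> rfl
    have hIpos : 0 < Iser a x := by
      have hle : a N * x ^ N ≤ Iser a x :=
        Summable.le_tsum hsI N (fun j _ => hterm_nonneg j)
      have : 0 < a N * x ^ N := mul_pos haN (pow_pos hx0 N)
      linarith
    have hIle : Iser a x ≤ Tot * x ^ N := by
      have heq : Iser a x = ∑ n ∈ Finset.range (N + 1), a n * x ^ n :=
        tsum_eq_sum hvan
      rw [heq, hTot, Finset.sum_mul]
      apply Finset.sum_le_sum
      intro i hi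
      rw [Finset.mem_range] at hi
      exact mul_le_mul_of_nonneg_left (pow_le_pow_right₀ hx1 (by omega)) (ha.1 i)
    have hnum : a N * x ^ N ≤
        sumLE a x (f.eval x * (1 - C * x ^ (-ν)))
          + sumGE a x (f.eval x * (1 + C * x ^ (-ν))) := by
      rcases hdx with h | h
      · have h1 : a N * x ^ N ≤ sumLE a x (f.eval x * (1 - C * x ^ (-ν))) := by
          have := Summable.le_tsum hs1 N (fun j _ => by split_ifs; exacts [hterm_nonneg j, le_rfl])
          rwa [if_pos h] at this
        have h2 : 0 ≤ sumGE a x (f.eval x * (1 + C * x ^ (-ν))) :=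
          tsum_nonneg (fun j => by split_ifs; exacts [hterm_nonneg j, le_rfl])
        linarith
      · have h1 : a N * x ^ N ≤ sumGE a x (f.eval x * (1 + C * x ^ (-ν))) := by
          have := Summable.le_tsum hs2 N (fun j _ => by split_ifs; exacts [hterm_nonneg j, le_rfl])
          rwa [if_pos h] at this
        have h2 : 0 ≤ sumLE a x (f.eval x * (1 - C * x ^ (-ν))) :=
          tsum_nonneg (fun j => by split_ifs; exacts [hterm_nonneg j, le_rfl])
        linarith
    rw [← add_div, le_div_iff₀ hIpos]
    calc ε * Iser a x ≤ ε * (Tot * x ^ N) := by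
          apply mul_le_mul_of_nonneg_left hIle hεpos.le
      _ = a N * x ^ N := by
          rw [hε]; field_simp
      _ ≤ _ := hnum
  -- limits
  have h1 := (hconc 1 one_pos).1.trans_tendsto (tendsto_rpow_neg_atTop one_pos)
  have h2 := (hconc 1 one_pos).2.trans_tendsto (tendsto_rpow_neg_atTop one_pos)
  have hsum0 := h1.add h2
  rw [add_zero] at hsum0
  have hlt := hsum0.eventually_lt_const hεpos
  rcases (hkey.and hlt).exists with ⟨x, hge, hlt'⟩
  simp only at hlt'
  linarith
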